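/- The number of runs of the Burrows–Wheeler transform of T is at most the number of suffix-tree edges of T from maximal-repeat nodes to non-maximal-repeat nodes: r_T ≤ |F^r_T|. -/

import Mathlib

/-! Basic definitions: strings are lists of naturals; the separator `#` is `0`;
the alphabet is `Σ = [1..σ]`. Occurrences are taken in the circular version of `T`. -/

noncomputable section
open Classical

/-- `T` is a string over the alphabet `[1..σ]` followed by the separator `# = 0`
(so `#` occurs in `T` exactly once, at the last position). -/
def Wellformed (σ : ℕ) (T : List ℕ) : Prop :=
  ∃ S : List ℕ, T = S ++ [0] ∧ ∀ c ∈ S, 1 ≤ c ∧ c ≤ σ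

/-- The rotation of `T` starting at position `i`. -/
def rot (T : List ℕ) (i : ℕ) : List ℕ := T.drop i ++ T.take i

/-- `W` occurs at position `i` of the circular version of `T`. -/
def CircOccAt (T W : List ℕ) (i : ℕ) : Prop :=
  ∀ j < W.length, W.getD j 0 = T.getD ((i + j) % T.length) 0

/-- `𝒫_T(W)`: the set of starting positions of occurrences of `W` in the circular
version of `T`. -/
def Pset (T W : List ℕ) : Finset ℕ :=
  (Finset.range T.length).filter (fun i => CircOccAt T W i)

/-- `W` occurs in the circular version of `T`. -/
def OccursCirc (T W : List ℕ) : Prop := (Pset T W).Nonempty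

/-- `Σ^ℓ_T(W)`: the set of characters `a` such that `aW` occurs in circular `T`. -/
def SigmaL (T W : List ℕ) : Finset ℕ :=
  T.toFinset.filter (fun a => OccursCirc T (a :: W))

/-- `Σ^r_T(W)`: the set of characters `b` such that `Wb` occurs in circular `T`. -/
def SigmaR (T W : List ℕ) : Finset ℕ :=
  T.toFinset.filter (fun b => OccursCirc T (W ++ [b]))

/-- `W` is left-maximal in `T`. -/
def LeftMaximal (T W : List ℕ) : Prop := 1 < (SigmaL T W).card

/-- `W` is right-maximal in `T`. -/
def RightMaximal (T W : List ℕ) : Prop := 1 < (SigmaR T W).card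

/-- The (finite) collection of substrings of the circular version of `T`. -/
def circSubstrings (T : List ℕ) : Finset (List ℕ) :=
  ((Finset.range T.length) ×ˢ (Finset.range (T.length + 1))).image
    (fun p => (rot T p.1).take p.2)

/-- `ℳ_T`: the set of nonempty maximal repeats of `T`, i.e. repeats that are both
left-maximal and right-maximal.  (Every maximal repeat occurs in circular `T` and has
length at most `|T|`, so it belongs to `circSubstrings T`.) -/
def MaxRepeats (T : List ℕ) : Finset (List ℕ) :=
  (circSubstrings T).filter
    (fun W => W ≠ [] ∧ 1 < (Pset T W).card ∧ LeftMaximal T W ∧ RightMaximal T W)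

/-- Strict lexicographic comparison of strings (a proper prefix is smaller). -/
def lexLt : List ℕ → List ℕ → Bool
  | [], [] => false
  | [], _ :: _ => true
  | _ :: _, [] => false
  | a :: A, b :: B => decide (a < b) || (a == b && lexLt A B)

/-- Non-strict lexicographic comparison. -/
def lexLe (A B : List ℕ) : Bool := !(lexLt B A)

/-- The Burrows–Wheeler transform of `T`: the `i`-th character of `BWT T` is the last
character of the lexicographically `i`-th rotation of `T`. -/
def BWT (T : List ℕ) : List ℕ :=
  (((List.range T.length).map (rot T)).mergeSort lexLe).map (fun R => R.getLast!)

/-- The number of runs of a string, i.e. the number of maximal intervals on which all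
characters are equal. -/
def numRuns : List ℕ → ℕ
  | [] => 0
  | [_] => 1
  | a :: b :: l => (if a = b then 0 else 1) + numRuns (b :: l)


noncomputable section
open Classical

/-- `ℳ^r_T`: the set of rightmost maximal repeats of `T`: maximal repeats `W` such that
no string `WV` with `V` nonempty is left-maximal in `T`. -/
def RightmostMaxRepeats (T : List ℕ) : Finset (List ℕ) :=
  (MaxRepeats T).filter (fun W => ∀ V : List ℕ, V ≠ [] → ¬ LeftMaximal T (W ++ V))

/-- `Y` is the shortest right-maximal extension of `X` in `T`: the shortest
right-maximal string of `T` having `X` as a prefix. -/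
def ShortestRightMaxExt (T X Y : List ℕ) : Prop :=
  X <+: Y ∧ RightMaximal T Y ∧
    ∀ Z : List ℕ, X <+: Z → RightMaximal T Z → Y.length ≤ Z.length

/-- `ℱ^r_T`: pairs `(V, b)` with `V ∈ ℳ_T ∪ {ε}` and `b ∈ Σ^r_T(V)` such that either
`Vb` occurs exactly once in circular `T`, or the shortest right-maximal extension of
`Vb` is not a maximal repeat of `T`.  These pairs correspond to the suffix-tree edges
of `T` from maximal-repeat nodes to non-maximal-repeat nodes. -/
def Fr (T : List ℕ) : Finset (List ℕ × ℕ) :=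
  ((insert ([] : List ℕ) (MaxRepeats T)) ×ˢ T.toFinset).filter
    (fun p => p.2 ∈ SigmaR T p.1 ∧
      ((Pset T (p.1 ++ [p.2])).card = 1 ∨
        ∀ Y : List ℕ, ShortestRightMaxExt T (p.1 ++ [p.2]) Y → Y ∉ MaxRepeats T))

/-- `e_T`: the number of right extensions of maximal repeats of `T`, i.e. the number of
pairs `(V, b)` with `V ∈ ℳ_T ∪ {ε}` and `b ∈ Σ^r_T(V)`.  This equals the number of
arcs of the CDAWG of `T`. -/
def eCount (T : List ℕ) : ℕ :=
  ∑ V ∈ insert ([] : List ℕ) (MaxRepeats T), (SigmaR T V).card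

/-- The next LZ77 factor, to be placed at position `k` of `T`, may be `F` if `F` is a
single character (every single character of `T` has a source among the `σ+1` distinct
characters virtually preceding `T`), or if `F` has an occurrence in `T` starting at a
position `j` strictly before `k`. -/
def LZsource (T : List ℕ) (k : ℕ) (F : List ℕ) : Prop :=
  F.length = 1 ∨ ∃ j, j < k ∧ F <+: T.drop j

/-- `fs` is the LZ77 factorization of `T` (greedy: each factor is the longest prefix of
the remaining suffix admitting a source). -/
def IsLZ77 (T : List ℕ) (fs : List (List ℕ)) : Prop :=
  fs.flatten = T ∧ (∀ F ∈ fs, F ≠ []) ∧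
    ∀ i, (h : i < fs.length) →
      LZsource T ((fs.take i).flatten).length (fs.get ⟨i, h⟩) ∧
      ∀ F' : List ℕ, F' <+: T.drop ((fs.take i).flatten).length →
        (fs.get ⟨i, h⟩).length < F'.length →
          ¬ LZsource T ((fs.take i).flatten).length F'

/-- `N_T(X)`: the number of rotations of `T` lexicographically smaller than `X`. -/
def Nrank (T X : List ℕ) : ℕ :=
  ((List.range T.length).filter (fun i => lexLt (rot T i) X)).length

/-- The string `a b a² b a³ b ⋯ aˣ b #`. -/
def Tx (a b x : ℕ) : List ℕ :=
  (((List.range x).map (fun i => List.replicate (i + 1) a ++ [b])).flatten) ++ [0]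

end

noncomputable section
open Classical List

namespace RunsAux

/-! ### Lex order lemmas -/

theorem lexLt_irrefl : ∀ A : List ℕ, lexLt A A = false
  | [] => rfl
  | a :: A => by simp [lexLt, lexLt_irrefl A]

theorem lexLt_trans : ∀ {A B C : List ℕ}, lexLt A B = true → lexLt B C = true →
    lexLt A C = true
  | [], _ :: _, _ :: _, _, _ => rfl
  | [], [], _, h, _ => by simp [lexLt] at h
  | _, _ :: _, [], _, h => by simp [lexLt] at h
  | _ :: _, [], _, h, _ => by simp [lexLt] at h
  | a :: A, b :: B, c :: C, h1, h2 => by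
    simp only [lexLt, Bool.or_eq_true, decide_eq_true_eq, Bool.and_eq_true, beq_iff_eq] at *
    rcases h1 with h1 | ⟨rfl, h1⟩ <;> rcases h2 with h2 | ⟨rfl, h2⟩
    · exact Or.inl (h1.trans h2)
    · exact Or.inl h1
    · exact Or.inl h2
    · exact Or.inr ⟨rfl, lexLt_trans h1 h2⟩

theorem lexLt_trichotomy : ∀ A B : List ℕ, lexLt A B = true ∨ A = B ∨ lexLt B A = true
  | [], [] => Or.inr (Or.inl rfl)
  | [], _ :: _ => Or.inl rfl
  | _ :: _, [] => Or.inr (Or.inr rfl)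
  | a :: A, b :: B => by
    rcases Nat.lt_trichotomy a b with h | rfl | h
    · exact Or.inl (by simp [lexLt, h])
    · rcases lexLt_trichotomy A B with h | rfl | h
      · exact Or.inl (by simp [lexLt, h])
      · exact Or.inr (Or.inl rfl)
      · exact Or.inr (Or.inr (by simp [lexLt, h]))
    · exact Or.inr (Or.inr (by simp [lexLt, h]))

theorem lexLt_asymm {A B : List ℕ} (h : lexLt A B = true) : lexLt B A = false := by
  by_contra hc
  have : lexLt A A = true := lexLt_trans h (by revert hc; cases lexLt B A <;> simp)
  simp [lexLt_irrefl] at this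

theorem lexLe_total (A B : List ℕ) : (lexLe A B || lexLe B A) = true := by
  unfold lexLe
  rcases lexLt_trichotomy A B with h | rfl | h
  · simp [lexLt_asymm h]
  · simp [lexLt_irrefl]
  · simp [lexLt_asymm h]

theorem lexLe_trans {A B C : List ℕ} (h1 : lexLe A B = true) (h2 : lexLe B C = true) :
    lexLe A C = true := by
  unfold lexLe at *
  by_contra hc
  have hCA : lexLt C A = true := by revert hc; cases lexLt C A <;> simp
  have hBA : lexLt B A = false := by revert h1; cases lexLt B A <;> simp
  have hCB : lexLt C B = false := by revert h2; cases lexLt C B <;> simp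
  rcases lexLt_trichotomy C B with h | rfl | h
  · simp [h] at hCB
  · simp [hCA] at hBA
  · have := lexLt_trans h hCA
    simp [this] at hBA

/-- If `X ≤ Y ≤ Z` and `P` is a prefix of both `X` and `Z`, then `P` is a prefix of `Y`. -/
theorem prefix_of_between : ∀ (P X Y Z : List ℕ), lexLe X Y = true → lexLe Y Z = true →
    P <+: X → P <+: Z → P <+: Y
  | [], _, _, _, _, _, _, _ => nil_prefix
  | p :: P, X, Y, Z, hXY, hYZ, hPX, hPZ => by
    obtain ⟨X', rfl⟩ := hPX
    obtain ⟨Z', rfl⟩ := hPZ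
    cases Y with
    | nil =>
      exfalso
      simp [lexLe, lexLt] at hXY
    | cons q Y' =>
      unfold lexLe at hXY hYZ
      simp only [cons_append, lexLt, Bool.not_eq_true', Bool.or_eq_false_iff,
        Bool.and_eq_false_iff, decide_eq_false_iff_not, beq_eq_false_iff_ne] at hXY hYZ
      obtain ⟨h1, h2⟩ := hXY
      obtain ⟨h3, h4⟩ := hYZ
      have hqp : q = p := by omega
      subst hqp
      have hYX : lexLt Y' (P ++ X') = false := by
        rcases h2 with h | h
        · exact absurd rfl h
        · exact h
      have hZY : lexLt (P ++ Z') Y' = false := by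
        rcases h4 with h | h
        · exact absurd rfl h
        · exact h
      obtain ⟨t, rfl⟩ := prefix_of_between P (P ++ X') Y' (P ++ Z')
        (by unfold lexLe; simp [hYX]) (by unfold lexLe; simp [hZY])
        (prefix_append _ _) (prefix_append _ _)
      exact ⟨t, rfl⟩

/-! ### Rotations and circular occurrences -/

theorem rot_length (T : List ℕ) (i : ℕ) : (rot T i).length = T.length := by
  simp [rot]; omega

theorem rot_getD (T : List ℕ) {i j : ℕ} (hi : i < T.length) (hj : j < T.length) :
    (rot T i).getD j 0 = T.getD ((i + j) % T.length) 0 := by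
  have h1 : j < (rot T i).length := by rw [rot_length]; exact hj
  have h2 : (i + j) % T.length < T.length := Nat.mod_lt _ (by omega)
  rw [List.getD_eq_getElem _ _ h1, List.getD_eq_getElem _ _ h2]
  simp only [rot]
  by_cases h : j < T.length - i
  · rw [List.getElem_append_left (by simp [List.length_drop]; omega)]
    rw [List.getElem_drop]
    congr 1
    rw [Nat.mod_eq_of_lt (by omega)]
  · rw [List.getElem_append_right (by simp [List.length_drop]; omega)]
    rw [List.getElem_take]
    congr 1
    rw [Nat.mod_eq_sub_mod (by omega), Nat.mod_eq_of_lt (by omega)]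
    simp [List.length_drop]
    omega

theorem prefix_iff_getD {W R : List ℕ} :
    W <+: R ↔ W.length ≤ R.length ∧ ∀ j < W.length, W.getD j 0 = R.getD j 0 := by
  constructor
  · intro h
    refine ⟨h.length_le, fun j hj => ?_⟩
    obtain ⟨t, rfl⟩ := h
    rw [List.getD_eq_getElem _ _ hj, List.getD_eq_getElem _ _ (by simp; omega)]
    rw [List.getElem_append_left hj]
  · rintro ⟨hlen, h⟩
    rw [List.prefix_iff_eq_take]
    apply List.ext_getElem
    · simp; omega
    · intro j h1 h2
      have hj : j < W.length := h1
      have := h j hj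
      rw [List.getD_eq_getElem _ _ hj, List.getD_eq_getElem _ _ (by omega)] at this
      rw [this, List.getElem_take]

theorem circOcc_iff_prefix {T W : List ℕ} {i : ℕ} (hi : i < T.length)
    (hW : W.length ≤ T.length) : CircOccAt T W i ↔ W <+: rot T i := by
  rw [prefix_iff_getD, rot_length]
  constructor
  · intro h
    exact ⟨hW, fun j hj => by rw [h j hj, rot_getD T hi (by omega)]⟩
  · rintro ⟨-, h⟩
    intro j hj
    rw [h j hj, rot_getD T hi (by omega)]

theorem mem_Pset {T W : List ℕ} {i : ℕ} :
    i ∈ Pset T W ↔ i < T.length ∧ CircOccAt T W i := by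
  simp [Pset]

theorem circOcc_of_prefix {T W W' : List ℕ} {i : ℕ} (hp : W' <+: W)
    (h : CircOccAt T W i) : CircOccAt T W' i := by
  intro j hj
  rw [(prefix_iff_getD.mp hp).2 j hj]
  exact h j (by have := hp.length_le; omega)

theorem getD_mem_toFinset {T : List ℕ} {k : ℕ} (hk : k < T.length) :
    T.getD k 0 ∈ T.toFinset := by
  rw [List.getD_eq_getElem _ _ hk]
  rw [List.mem_toFinset]
  exact List.getElem_mem hk

theorem circOcc_snoc {T W : List ℕ} {b i : ℕ} (hn : 0 < T.length) :
    CircOccAt T (W ++ [b]) i ↔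
      CircOccAt T W i ∧ b = T.getD ((i + W.length) % T.length) 0 := by
  constructor
  · intro h
    constructor
    · intro j hj
      have := h j (by simp; omega)
      rwa [List.getD_eq_getElem _ _ (by simp; omega), List.getElem_append_left hj,
        ← List.getD_eq_getElem _ _ hj] at this
    · have := h W.length (by simp)
      rw [List.getD_eq_getElem _ _ (by simp), List.getElem_append_right (le_refl _)] at this
      simpa using this
  · rintro ⟨h, rfl⟩
    intro j hj
    simp only [List.length_append, List.length_singleton] at hj
    rcases Nat.lt_or_ge j W.length with hj' | hj'
    · rw [List.getD_eq_getElem _ _ (by simp; omega), List.getElem_append_left hj',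
        ← List.getD_eq_getElem _ _ hj']
      exact h j hj'
    · have hj2 : j = W.length := by omega
      subst hj2
      rw [List.getD_eq_getElem _ _ (by simp), List.getElem_append_right (le_refl _)]
      simp

theorem circOcc_cons_pred {T W : List ℕ} {p : ℕ} (hp : p < T.length)
    (h : CircOccAt T W p) :
    CircOccAt T (T.getD ((p + T.length - 1) % T.length) 0 :: W)
      ((p + T.length - 1) % T.length) := by
  set n := T.length with hn
  have hn0 : 0 < n := by omega
  set q := (p + n - 1) % n with hq
  have hqlt : q < n := Nat.mod_lt _ hn0
  intro j hj
  cases j with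
  | zero =>
    rw [List.getD_cons_zero]
    congr 1
    rw [Nat.add_zero, Nat.mod_eq_of_lt hqlt]
  | succ j =>
    rw [List.getD_cons_succ]
    rw [h j (by simpa using hj)]
    congr 1
    rw [hq, Nat.mod_add_mod]
    have h1 : p + n - 1 + (j + 1) = p + j + n := by omega
    rw [h1, Nat.add_mod_right]

/-! ### Wellformedness consequences -/

theorem wf_pos {σ : ℕ} {T : List ℕ} (hT : Wellformed σ T) : 0 < T.length := by
  obtain ⟨S, rfl, -⟩ := hT; simp

theorem wf_last {σ : ℕ} {T : List ℕ} (hT : Wellformed σ T) :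
    T.getD (T.length - 1) 0 = 0 := by
  obtain ⟨S, rfl, -⟩ := hT
  rw [List.getD_eq_getElem _ _ (by simp)]
  rw [List.getElem_append_right (by simp)]
  simp

theorem wf_zero_unique {σ : ℕ} {T : List ℕ} (hT : Wellformed σ T) {k : ℕ}
    (hk : k < T.length) (h0 : T.getD k 0 = 0) : k = T.length - 1 := by
  obtain ⟨S, rfl, hS⟩ := hT
  by_contra hne
  have hk' : k < S.length := by
    simp only [List.length_append, List.length_singleton] at hk hne
    omega
  rw [List.getD_eq_getElem _ _ hk, List.getElem_append_left hk'] at h0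
  have := hS S[k] (List.getElem_mem hk')
  omega

/-- if two positions look the same circularly everywhere, they're equal -/
theorem pos_eq_of_agree {σ : ℕ} {T : List ℕ} (hT : Wellformed σ T) {i₁ i₂ : ℕ}
    (h1 : i₁ < T.length) (h2 : i₂ < T.length)
    (h : ∀ j < T.length, T.getD ((i₁ + j) % T.length) 0 = T.getD ((i₂ + j) % T.length) 0) :
    i₁ = i₂ := by
  set n := T.length with hn
  have hn0 : 0 < n := wf_pos hT
  have hj1 : n - 1 - i₁ < n := by omega
  have e1 : (i₁ + (n - 1 - i₁)) % n = n - 1 := by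
    rw [Nat.mod_eq_of_lt (by omega)]; omega
  have := h (n - 1 - i₁) hj1
  rw [e1, wf_last hT] at this
  have h2' : (i₂ + (n - 1 - i₁)) % n = n - 1 :=
    wf_zero_unique hT (Nat.mod_lt _ hn0) this.symm
  have : (i₂ + (n - 1 - i₁)) % n = (i₁ + (n - 1 - i₁)) % n := by rw [h2', e1]
  have hmod : i₂ % n = i₁ % n := Nat.ModEq.add_right_cancel' _ this
  rw [Nat.mod_eq_of_lt h2, Nat.mod_eq_of_lt h1] at hmod
  exact hmod.symm

theorem rot_inj {σ : ℕ} {T : List ℕ} (hT : Wellformed σ T) {i₁ i₂ : ℕ}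
    (h1 : i₁ < T.length) (h2 : i₂ < T.length) (h : rot T i₁ = rot T i₂) : i₁ = i₂ := by
  apply pos_eq_of_agree hT h1 h2
  intro j hj
  rw [← rot_getD T h1 hj, ← rot_getD T h2 hj, h]

theorem Pset_rot {σ : ℕ} {T : List ℕ} (hT : Wellformed σ T) {p : ℕ} (hp : p < T.length) :
    Pset T (rot T p) = {p} := by
  ext i
  simp only [Finset.mem_singleton]
  rw [mem_Pset]
  constructor
  · rintro ⟨hi, hocc⟩
    have hpre := (circOcc_iff_prefix hi (by rw [rot_length])).mp hocc
    have heq : rot T p = rot T i := hpre.eq_of_length (by rw [rot_length, rot_length])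
    exact rot_inj hT hi hp heq.symm
  · rintro rfl
    exact ⟨hp, (circOcc_iff_prefix hp (by rw [rot_length])).mpr (List.prefix_refl _)⟩

/-! ### Right/left maximality tools -/

theorem mem_SigmaR {T W : List ℕ} {b : ℕ} :
    b ∈ SigmaR T W ↔ b ∈ T.toFinset ∧ OccursCirc T (W ++ [b]) := by
  simp [SigmaR]

theorem mem_SigmaL {T W : List ℕ} {a : ℕ} :
    a ∈ SigmaL T W ↔ a ∈ T.toFinset ∧ OccursCirc T (a :: W) := by
  simp [SigmaL]

theorem snoc_char_mem {T W : List ℕ} {b i : ℕ} (hn : 0 < T.length)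
    (h : CircOccAt T (W ++ [b]) i) : b ∈ T.toFinset := by
  rw [((circOcc_snoc hn).mp h).2]
  exact getD_mem_toFinset (Nat.mod_lt _ hn)

theorem mem_SigmaR_of_occ {T W : List ℕ} {b i : ℕ} (hn : 0 < T.length) (hi : i < T.length)
    (h : CircOccAt T (W ++ [b]) i) : b ∈ SigmaR T W :=
  mem_SigmaR.mpr ⟨snoc_char_mem hn h, ⟨i, mem_Pset.mpr ⟨hi, h⟩⟩⟩

theorem rightMax_of_two {T W : List ℕ} {b₁ b₂ i₁ i₂ : ℕ} (hn : 0 < T.length)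
    (hi₁ : i₁ < T.length) (hi₂ : i₂ < T.length)
    (h1 : CircOccAt T (W ++ [b₁]) i₁) (h2 : CircOccAt T (W ++ [b₂]) i₂)
    (hne : b₁ ≠ b₂) : RightMaximal T W := by
  rw [RightMaximal, Finset.one_lt_card]
  exact ⟨b₁, mem_SigmaR_of_occ hn hi₁ h1, b₂, mem_SigmaR_of_occ hn hi₂ h2, hne⟩

theorem next_char_eq {T W : List ℕ} {b₁ b₂ i₁ i₂ : ℕ} (hn : 0 < T.length)
    (hnrm : ¬ RightMaximal T W) (hi₁ : i₁ < T.length) (hi₂ : i₂ < T.length)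
    (h1 : CircOccAt T (W ++ [b₁]) i₁) (h2 : CircOccAt T (W ++ [b₂]) i₂) : b₁ = b₂ := by
  rw [RightMaximal, not_lt] at hnrm
  exact Finset.card_le_one.mp hnrm _ (mem_SigmaR_of_occ hn hi₁ h1) _
    (mem_SigmaR_of_occ hn hi₂ h2)

theorem prev_char_eq {T W : List ℕ} {p₁ p₂ : ℕ} (hn : 0 < T.length)
    (hnlm : ¬ LeftMaximal T W) (hp₁ : p₁ < T.length) (hp₂ : p₂ < T.length)
    (h1 : CircOccAt T W p₁) (h2 : CircOccAt T W p₂) :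
    T.getD ((p₁ + T.length - 1) % T.length) 0 = T.getD ((p₂ + T.length - 1) % T.length) 0 := by
  rw [LeftMaximal, not_lt] at hnlm
  have m1 := circOcc_cons_pred hp₁ h1
  have m2 := circOcc_cons_pred hp₂ h2
  apply Finset.card_le_one.mp hnlm
  · exact mem_SigmaL.mpr ⟨getD_mem_toFinset (Nat.mod_lt _ hn),
      ⟨_, mem_Pset.mpr ⟨Nat.mod_lt _ hn, m1⟩⟩⟩
  · exact mem_SigmaL.mpr ⟨getD_mem_toFinset (Nat.mod_lt _ hn),
      ⟨_, mem_Pset.mpr ⟨Nat.mod_lt _ hn, m2⟩⟩⟩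

theorem rightMax_occurs {T Y : List ℕ} (h : RightMaximal T Y) :
    ∃ i < T.length, CircOccAt T Y i := by
  rw [RightMaximal] at h
  have hpos : 0 < (SigmaR T Y).card := by omega
  obtain ⟨b, hb⟩ := Finset.card_pos.mp hpos
  obtain ⟨-, i, hi⟩ := mem_SigmaR.mp hb
  rw [mem_Pset] at hi
  exact ⟨i, hi.1, circOcc_of_prefix (List.prefix_append _ _) hi.2⟩

theorem rightMax_length_lt {σ : ℕ} {T Y : List ℕ} (hT : Wellformed σ T)
    (h : RightMaximal T Y) : Y.length < T.length := by
  set n := T.length with hn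
  have hn0 : 0 < n := wf_pos hT
  by_contra hge
  rw [not_lt] at hge
  obtain ⟨b₁, hb₁, b₂, hb₂, hne⟩ := Finset.one_lt_card.mp h
  obtain ⟨-, i₁, hi₁⟩ := mem_SigmaR.mp hb₁
  obtain ⟨-, i₂, hi₂⟩ := mem_SigmaR.mp hb₂
  rw [mem_Pset] at hi₁ hi₂
  obtain ⟨hi₁n, ho₁⟩ := hi₁
  obtain ⟨hi₂n, ho₂⟩ := hi₂
  have hY₁ := circOcc_of_prefix (List.prefix_append _ [b₁]) ho₁
  have hY₂ := circOcc_of_prefix (List.prefix_append _ [b₂]) ho₂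
  have : i₁ = i₂ := by
    apply pos_eq_of_agree hT hi₁n hi₂n
    intro j hj
    rw [← hY₁ j (by omega), ← hY₂ j (by omega)]
  subst this
  apply hne
  have e1 := ((circOcc_snoc hn0).mp ho₁).2
  have e2 := ((circOcc_snoc hn0).mp ho₂).2
  rw [e1, e2]

/-! ### The chain lemma: occurrences of `X` extend to its shortest right-maximal
extension -/

theorem chain_occ {σ : ℕ} {T X Y : List ℕ} (hT : Wellformed σ T)
    (hXY : X <+: Y) (hrm : RightMaximal T Y)
    (hmin : ∀ Z : List ℕ, X <+: Z → RightMaximal T Z → Y.length ≤ Z.length)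
    {i : ℕ} (hi : i < T.length) (hocc : CircOccAt T X i) : CircOccAt T Y i := by
  set n := T.length with hn
  have hn0 : 0 < n := wf_pos hT
  have hYn : Y.length < n := rightMax_length_lt hT hrm
  obtain ⟨q, hq, hYq⟩ := rightMax_occurs hrm
  have key : ∀ m, X.length ≤ m → m ≤ Y.length → CircOccAt T (Y.take m) i := by
    intro m
    induction m with
    | zero =>
      intro h1 h2
      have : X = [] := by
        cases X with
        | nil => rfl
        | cons a t => simp at h1
      subst this
      simp only [List.take_zero]
      intro j hj
      simp at hj
    | succ m ih =>
      intro h1 h2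
      rcases Nat.lt_or_ge m X.length with hcase | hcase
      · -- m + 1 ≤ X.length combined with X.length ≤ m + 1 gives m + 1 = X.length
        have hXlen : X.length = m + 1 := by omega
        have : Y.take (m + 1) = X := by
          rw [← hXlen]
          exact (List.prefix_iff_eq_take.mp hXY).symm
        rw [this]
        exact hocc
      · have hm : CircOccAt T (Y.take m) i := ih hcase (by omega)
        set Z := Y.take m with hZ
        have hZlen : Z.length = m := by rw [hZ, List.length_take]; omega
        have hZX : X <+: Z := by
          rw [hZ, List.prefix_take_iff]
          exact ⟨hXY, hcase⟩
        have hZnotrm : ¬ RightMaximal T Z := by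
          intro hc
          have := hmin Z hZX hc
          omega
        have hmY : m < Y.length := by omega
        -- Y.take (m+1) = Z ++ [Y.getD m 0]
        have htake : Y.take (m + 1) = Z ++ [Y.getD m 0] := by
          rw [List.take_succ, hZ]
          congr 1
          rw [List.getElem?_eq_getElem hmY, List.getD_eq_getElem _ _ hmY]
          rfl
        -- occurrence of Y.take (m+1) at q
        have hoccq : CircOccAt T (Y.take (m + 1)) q :=
          circOcc_of_prefix (List.take_prefix _ _) hYq
        rw [htake] at hoccq
        -- occurrence of Z ++ [c] at i where c is the next character
        have hocci : CircOccAt T (Z ++ [T.getD ((i + m) % n) 0]) i := by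
          rw [circOcc_snoc hn0]
          exact ⟨hm, by rw [hZlen]⟩
        have := next_char_eq hn0 hZnotrm hi hq hocci hoccq
        rw [htake, ← this]
        exact hocci
  have := key Y.length hXY.length_le (le_refl _)
  rwa [List.take_length] at this

theorem exists_min_rm {T X : List ℕ} (hex : ∃ Z : List ℕ, X <+: Z ∧ RightMaximal T Z) :
    ∃ Y : List ℕ, ShortestRightMaxExt T X Y := by
  classical
  have hex' : ∃ m : ℕ, ∃ Z : List ℕ, Z.length = m ∧ X <+: Z ∧ RightMaximal T Z := by
    obtain ⟨Z, h1, h2⟩ := hex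
    exact ⟨Z.length, Z, rfl, h1, h2⟩
  obtain ⟨Y, hYlen, hYX, hYrm⟩ := Nat.find_spec hex'
  refine ⟨Y, hYX, hYrm, fun Z hZX hZrm => ?_⟩
  rw [hYlen]
  exact Nat.find_min' hex' ⟨Z, rfl, hZX, hZrm⟩

/-- from two distinct rotations sharing a prefix `X`, get a right-maximal extension
of `X` -/
theorem exists_rm_ext {σ : ℕ} {T X : List ℕ} (hT : Wellformed σ T) {p q : ℕ}
    (hp : p < T.length) (hq : q < T.length) (hXp : X <+: rot T p) (hXq : X <+: rot T q)
    (hne : rot T p ≠ rot T q) : ∃ Z : List ℕ, X <+: Z ∧ RightMaximal T Z := by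
  classical
  set n := T.length with hn
  have hn0 : 0 < n := wf_pos hT
  set R₁ := rot T p with hR₁
  set R₂ := rot T q with hR₂
  have hlen₁ : R₁.length = n := rot_length T p
  have hlen₂ : R₂.length = n := rot_length T q
  have hdex : ∃ d : ℕ, R₁.getD d 0 ≠ R₂.getD d 0 := by
    by_contra hc
    push_neg at hc
    apply hne
    apply List.ext_getElem (by omega)
    intro j h1 h2
    have := hc j
    rwa [List.getD_eq_getElem _ _ h1, List.getD_eq_getElem _ _ h2] at this
  set d := Nat.find hdex with hd
  have hdspec : R₁.getD d 0 ≠ R₂.getD d 0 := Nat.find_spec hdex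
  have hdmin : ∀ j < d, R₁.getD j 0 = R₂.getD j 0 := by
    intro j hj
    have := Nat.find_min hdex hj
    push_neg at this
    exact this
  have hdn : d < n := by
    by_contra hdge
    apply hdspec
    rw [not_lt] at hdge
    rw [List.getD_eq_getElem?_getD, List.getD_eq_getElem?_getD,
      List.getElem?_eq_none (by omega), List.getElem?_eq_none (by omega)]
  have hXd : X.length ≤ d := by
    by_contra hlt
    apply hdspec
    rw [not_le] at hlt
    rw [← (prefix_iff_getD.mp hXp).2 d hlt, ← (prefix_iff_getD.mp hXq).2 d hlt]
  refine ⟨R₁.take d, ?_, ?_⟩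
  · rw [List.prefix_take_iff]
    exact ⟨hXp, hXd⟩
  · -- the take (d+1) of each rotation is an occurrence with differing last chars
    have ht₁ : R₁.take (d + 1) = R₁.take d ++ [R₁.getD d 0] := by
      rw [List.take_succ]
      congr 1
      rw [List.getElem?_eq_getElem (by omega), List.getD_eq_getElem _ _ (by omega)]
      rfl
    have ht₂ : R₂.take (d + 1) = R₂.take d ++ [R₂.getD d 0] := by
      rw [List.take_succ]
      congr 1
      rw [List.getElem?_eq_getElem (by omega), List.getD_eq_getElem _ _ (by omega)]
      rfl
    have hsame : R₂.take d = R₁.take d := by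
      apply List.ext_getElem (by rw [List.length_take, List.length_take]; omega)
      intro j h1 h2
      have hjd : j < d := by
        have := (List.length_take (i := d) (l := R₂)) ▸ h1
        simp at h1
        omega
      rw [List.getElem_take, List.getElem_take,
        ← List.getD_eq_getElem R₂ 0 (show j < R₂.length by omega),
        ← List.getD_eq_getElem R₁ 0 (show j < R₁.length by omega)]
      exact (hdmin j hjd).symm
    have ho₁ : CircOccAt T (R₁.take d ++ [R₁.getD d 0]) p := by
      rw [← ht₁]
      exact (circOcc_iff_prefix hp (by rw [List.length_take]; omega)).mpr
        (by rw [← hR₁]; exact List.take_prefix _ _)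
    have ho₂ : CircOccAt T (R₁.take d ++ [R₂.getD d 0]) q := by
      rw [← hsame, ← ht₂]
      exact (circOcc_iff_prefix hq (by rw [List.length_take]; omega)).mpr
        (by rw [← hR₂]; exact List.take_prefix _ _)
    exact rightMax_of_two hn0 hp hq ho₁ ho₂ hdspec

theorem mem_circSubstrings_of_occ {T W : List ℕ} {i : ℕ} (hi : i < T.length)
    (hW : W.length ≤ T.length) (h : CircOccAt T W i) : W ∈ circSubstrings T := by
  rw [circSubstrings, Finset.mem_image]
  refine ⟨(i, W.length), ?_, ?_⟩
  · rw [Finset.mem_product]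
    exact ⟨Finset.mem_range.mpr hi, Finset.mem_range.mpr (by omega)⟩
  · have := (circOcc_iff_prefix hi hW).mp h
    exact ((List.prefix_iff_eq_take.mp this).symm : (rot T i).take W.length = W)

/-! ### BWT is constant on the occurrence class of `X` when all shortest
right-maximal extensions of `X` avoid maximal repeats -/

theorem mem_MaxRepeats {T Y : List ℕ} :
    Y ∈ MaxRepeats T ↔ Y ∈ circSubstrings T ∧ Y ≠ [] ∧ 1 < (Pset T Y).card ∧
      LeftMaximal T Y ∧ RightMaximal T Y := by
  rw [MaxRepeats, Finset.mem_filter]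

theorem last_eq_of_prefix {σ : ℕ} {T X : List ℕ} (hT : Wellformed σ T) (hX : X ≠ [])
    {p q : ℕ} (hp : p < T.length) (hq : q < T.length)
    (hXp : X <+: rot T p) (hXq : X <+: rot T q)
    (hnotM : ∀ Y : List ℕ, ShortestRightMaxExt T X Y → Y ∉ MaxRepeats T) :
    T.getD ((p + T.length - 1) % T.length) 0 = T.getD ((q + T.length - 1) % T.length) 0 := by
  set n := T.length with hn
  have hn0 : 0 < n := wf_pos hT
  by_cases heq : rot T p = rot T q
  · have : p = q := rot_inj hT hp hq heq
    rw [this]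
  · obtain ⟨Y, hsrme⟩ := exists_min_rm (exists_rm_ext hT hp hq hXp hXq heq)
    obtain ⟨hXY, hYrm, hYmin⟩ := hsrme
    have hYnM : Y ∉ MaxRepeats T := hnotM Y ⟨hXY, hYrm, hYmin⟩
    have hYn : Y.length < n := rightMax_length_lt hT hYrm
    have hXn : X.length ≤ n := le_trans hXp.length_le (le_of_eq (rot_length T p))
    have hoccXp : CircOccAt T X p := (circOcc_iff_prefix hp hXn).mpr hXp
    have hoccXq : CircOccAt T X q := (circOcc_iff_prefix hq hXn).mpr hXq
    have hoccYp : CircOccAt T Y p := chain_occ hT hXY hYrm hYmin hp hoccXp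
    have hoccYq : CircOccAt T Y q := chain_occ hT hXY hYrm hYmin hq hoccXq
    have hpq : p ≠ q := fun h => heq (by rw [h])
    -- Y is not left-maximal (otherwise it would be a maximal repeat)
    have hYnlm : ¬ LeftMaximal T Y := by
      intro hlm
      apply hYnM
      rw [mem_MaxRepeats]
      refine ⟨mem_circSubstrings_of_occ hp (by omega) hoccYp, ?_, ?_, hlm, hYrm⟩
      · intro hnil
        apply hX
        rw [hnil] at hXY
        exact List.prefix_nil.mp hXY
      · rw [Finset.one_lt_card]
        exact ⟨p, mem_Pset.mpr ⟨hp, hoccYp⟩, q, mem_Pset.mpr ⟨hq, hoccYq⟩, hpq⟩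
    exact prev_char_eq hn0 hYnlm hp hq hoccYp hoccYq

/-! ### The canonical `Fr` pair associated with a rotation -/

/-- the length of the longest prefix of `rot T p` lying in `insert [] (MaxRepeats T)` -/
noncomputable def Kof (T : List ℕ) (p : ℕ) : ℕ :=
  Nat.findGreatest (fun k => (rot T p).take k ∈ insert ([] : List ℕ) (MaxRepeats T))
    T.length

noncomputable def Vof (T : List ℕ) (p : ℕ) : List ℕ := (rot T p).take (Kof T p)

noncomputable def bof (T : List ℕ) (p : ℕ) : ℕ := (rot T p).getD (Kof T p) 0

theorem Kof_mem (T : List ℕ) (p : ℕ) :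
    (rot T p).take (Kof T p) ∈ insert ([] : List ℕ) (MaxRepeats T) := by
  exact Nat.findGreatest_spec (m := 0)
    (P := fun k => (rot T p).take k ∈ insert ([] : List ℕ) (MaxRepeats T))
    (n := T.length) (Nat.zero_le _) (by simp)

theorem Kof_lt {σ : ℕ} {T : List ℕ} (hT : Wellformed σ T) {p : ℕ} (hp : p < T.length) :
    Kof T p < T.length := by
  have hle : Kof T p ≤ T.length := Nat.findGreatest_le _
  rcases Nat.lt_or_ge (Kof T p) T.length with h | h
  · exact h
  · exfalso
    have hK : Kof T p = T.length := by omega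
    have := Kof_mem T p
    rw [hK] at this
    have htake : (rot T p).take T.length = rot T p := by
      rw [← rot_length T p, List.take_length]
    rw [htake] at this
    rcases Finset.mem_insert.mp this with h1 | h1
    · have : (rot T p).length = 0 := by rw [h1]; rfl
      rw [rot_length] at this
      have := wf_pos hT
      omega
    · have hcard := (mem_MaxRepeats.mp h1).2.2.1
      rw [Pset_rot hT hp] at hcard
      simp at hcard

theorem Vb_prefix {σ : ℕ} {T : List ℕ} (hT : Wellformed σ T) {p : ℕ} (hp : p < T.length) :
    Vof T p ++ [bof T p] = (rot T p).take (Kof T p + 1) := by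
  have hK : Kof T p < (rot T p).length := by rw [rot_length]; exact Kof_lt hT hp
  rw [Vof, bof, List.take_succ]
  congr 1
  rw [List.getElem?_eq_getElem hK, List.getD_eq_getElem _ _ hK]
  rfl

theorem Vof_length {σ : ℕ} {T : List ℕ} (hT : Wellformed σ T) {p : ℕ} (hp : p < T.length) :
    (Vof T p).length = Kof T p := by
  rw [Vof, List.length_take, rot_length]
  have := Kof_lt hT hp
  omega

theorem Vb_occ {σ : ℕ} {T : List ℕ} (hT : Wellformed σ T) {p : ℕ} (hp : p < T.length) :
    CircOccAt T (Vof T p ++ [bof T p]) p := by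
  rw [Vb_prefix hT hp]
  apply (circOcc_iff_prefix hp _).mpr (List.take_prefix _ _)
  rw [List.length_take, rot_length]
  omega

theorem Vb_notM {σ : ℕ} {T : List ℕ} (hT : Wellformed σ T) {p : ℕ}
    (hp : p < T.length) :
    ∀ Y : List ℕ, ShortestRightMaxExt T (Vof T p ++ [bof T p]) Y → Y ∉ MaxRepeats T := by
  have hocc := Vb_occ hT hp
  rintro Y ⟨hXY, hYrm, hYmin⟩ hYM
  -- Y occurs at p by the chain lemma, so Y is a prefix of rot T p
  have hoccY : CircOccAt T Y p :=
    chain_occ hT hXY hYrm hYmin hp hocc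
  have hYn : Y.length < T.length := rightMax_length_lt hT hYrm
  have hYpre : Y <+: rot T p := (circOcc_iff_prefix hp (by omega)).mp hoccY
  -- hence Y.length ≤ Kof, but Y.length ≥ Kof + 1
  have hYtake : (rot T p).take Y.length = Y := (List.prefix_iff_eq_take.mp hYpre).symm
  have hle : Y.length ≤ Kof T p := by
    apply Nat.le_findGreatest (by omega)
    rw [hYtake]
    exact Finset.mem_insert_of_mem hYM
  have hge : Kof T p + 1 ≤ Y.length := by
    have := hXY.length_le
    rw [List.length_append, List.length_singleton, Vof_length hT hp] at this
    omega
  omega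

theorem pair_mem_Fr {σ : ℕ} {T : List ℕ} (hT : Wellformed σ T) {p : ℕ}
    (hp : p < T.length) : (Vof T p, bof T p) ∈ Fr T := by
  have hn0 : 0 < T.length := wf_pos hT
  have hocc := Vb_occ hT hp
  rw [Fr, Finset.mem_filter, Finset.mem_product]
  exact ⟨⟨Kof_mem T p, snoc_char_mem hn0 hocc⟩, mem_SigmaR_of_occ hn0 hp hocc,
    Or.inr (Vb_notM hT hp)⟩

theorem getLast!_rot {σ : ℕ} {T : List ℕ} (hT : Wellformed σ T) {p : ℕ}
    (hp : p < T.length) :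
    (rot T p).getLast! = T.getD ((p + T.length - 1) % T.length) 0 := by
  have hn0 : 0 < T.length := wf_pos hT
  have hlen : (rot T p).length = T.length := rot_length T p
  have hlt : (rot T p).length - 1 < (rot T p).length := by omega
  apply List.getLast!_of_getLast?
  rw [List.getLast?_eq_getElem?, List.getElem?_eq_getElem hlt]
  congr 1
  rw [← List.getD_eq_getElem (rot T p) 0 hlt]
  rw [show (rot T p).length - 1 = T.length - 1 by omega]
  rw [rot_getD T hp (by omega)]
  congr 2
  omega

theorem lexLe_refl (A : List ℕ) : lexLe A A = true := by
  unfold lexLe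
  simp [lexLt_irrefl]

/-! ### Counting runs via run-start positions -/

theorem numRuns_le_card (l : List ℕ) :
    numRuns l ≤ ((Finset.range l.length).filter
      (fun i => i = 0 ∨ ¬ l.getD (i - 1) 0 = l.getD i 0)).card := by
  induction l with
  | nil => simp [numRuns]
  | cons a t ih =>
    cases t with
    | nil =>
      have h0 : (0 : ℕ) ∈ (Finset.range ([a] : List ℕ).length).filter
          (fun i => i = 0 ∨ ¬ ([a] : List ℕ).getD (i - 1) 0 = ([a] : List ℕ).getD i 0) := by
        rw [Finset.mem_filter]
        exact ⟨Finset.mem_range.mpr (by simp), Or.inl rfl⟩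
      have := Finset.card_pos.mpr ⟨0, h0⟩
      simpa [numRuns] using this
    | cons b t' =>
      set l' := b :: t' with hl'
      set S' := (Finset.range l'.length).filter
        (fun i => i = 0 ∨ ¬ l'.getD (i - 1) 0 = l'.getD i 0) with hS'
      set S := (Finset.range (a :: l').length).filter
        (fun i => i = 0 ∨ ¬ (a :: l').getD (i - 1) 0 = (a :: l').getD i 0) with hS
      set g : ℕ → ℕ := fun i => if i = 0 then (if a = b then 0 else 1) else i + 1 with hg
      have hmaps : ∀ i ∈ S', g i ∈ S := by
        intro i hi
        rw [hS', Finset.mem_filter, Finset.mem_range] at hi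
        obtain ⟨hilen, hicond⟩ := hi
        rw [hS, Finset.mem_filter, Finset.mem_range]
        rcases Nat.eq_zero_or_pos i with rfl | hipos
        · by_cases hab : a = b
          · simp [hg, hab]
          · refine ⟨by simp [hg, hab]; omega, ?_⟩
            simp only [hg, if_pos rfl, if_neg hab]
            right
            simpa [hl'] using hab
        · have hgi : g i = i + 1 := by simp [hg]; omega
          rw [hgi]
          refine ⟨by simp at hilen ⊢; omega, ?_⟩
          right
          have hcond : ¬ l'.getD (i - 1) 0 = l'.getD i 0 := by
            rcases hicond with h | h
            · omega
            · exact h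
          have e1 : (a :: l').getD (i + 1 - 1) 0 = l'.getD (i - 1) 0 := by
            have : i + 1 - 1 = (i - 1) + 1 := by omega
            rw [this, List.getD_cons_succ]
          have e2 : (a :: l').getD (i + 1) 0 = l'.getD i 0 := List.getD_cons_succ
          rw [e1, e2]
          exact hcond
      have hinj : Set.InjOn g ↑S' := by
        intro i hi j hj hij
        simp only [hg] at hij
        by_cases hi0 : i = 0 <;> by_cases hj0 : j = 0
        · rw [hi0, hj0]
        · exfalso; rw [if_pos hi0, if_neg hj0] at hij
          split at hij <;> omega
        · exfalso; rw [if_neg hi0, if_pos hj0] at hij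
          split at hij <;> omega
        · rw [if_neg hi0, if_neg hj0] at hij; omega
      have hcard : S'.card ≤ S.card := Finset.card_le_card_of_injOn g hmaps hinj
      by_cases hab : a = b
      · have : numRuns (a :: l') = numRuns l' := by
          rw [hl', numRuns, if_pos hab]; omega
        rw [this]
        exact le_trans ih hcard
      · -- extra run start at 0, and 0 is not in the image of g
        have h0S : (0 : ℕ) ∈ S := by
          rw [hS, Finset.mem_filter, Finset.mem_range]
          exact ⟨by simp, Or.inl rfl⟩
        have h0nimg : (0 : ℕ) ∉ S'.image g := by
          rw [Finset.mem_image]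
          rintro ⟨i, hi, hgi⟩
          simp only [hg] at hgi
          by_cases hi0 : i = 0
          · rw [if_pos hi0, if_neg hab] at hgi; omega
          · rw [if_neg hi0] at hgi; omega
        have hsub : insert 0 (S'.image g) ⊆ S := by
          intro x hx
          rcases Finset.mem_insert.mp hx with rfl | hx
          · exact h0S
          · obtain ⟨i, hi, rfl⟩ := Finset.mem_image.mp hx
            exact hmaps i hi
        have : 1 + S'.card ≤ S.card := by
          have h1 : (insert 0 (S'.image g)).card = 1 + (S'.image g).card := by
            rw [Finset.card_insert_of_notMem h0nimg]; omega
          have h2 : (S'.image g).card = S'.card := Finset.card_image_of_injOn hinj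
          have h3 := Finset.card_le_card hsub
          omega
        have hnr : numRuns (a :: l') = 1 + numRuns l' := by
          rw [hl', numRuns, if_neg hab]
        rw [hnr]
        omega

end RunsAux
end

/-- The number of runs of the Burrows–Wheeler transform of `T` is at
most the number of suffix-tree edges of `T` from maximal-repeat nodes to
non-maximal-repeat nodes: `r_T ≤ |ℱ^r_T|`. -/
theorem runs_le_Fr (σ : ℕ) (T : List ℕ) (hT : Wellformed σ T) :
    numRuns (BWT T) ≤ (Fr T).card := by
  classical
  have hn0 : 0 < T.length := RunsAux.wf_pos hT
  set n := T.length with hn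
  set L := ((List.range T.length).map (rot T)).mergeSort lexLe with hL
  have hperm : L.Perm ((List.range T.length).map (rot T)) := List.mergeSort_perm _ _
  have hLlen : L.length = n := by
    rw [hL, List.length_mergeSort, List.length_map, List.length_range]
  have hsorted : List.Pairwise (fun A B => lexLe A B = true) L :=
    List.pairwise_mergeSort (le := lexLe) (fun a b c h1 h2 => RunsAux.lexLe_trans h1 h2)
      RunsAux.lexLe_total _
  have hBWT : BWT T = L.map (fun R => R.getLast!) := rfl
  have hBWTlen : (BWT T).length = n := by rw [hBWT, List.length_map, hLlen]
  -- choose rotation positions for sorted indices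
  have hmem : ∀ i : ℕ, ∃ p : ℕ, i < n → p < n ∧ rot T p = L.getD i [] := by
    intro i
    by_cases hi : i < n
    · have h1 : L.getD i [] ∈ L := by
        rw [List.getD_eq_getElem _ _ (by omega)]
        exact List.getElem_mem _
      have h2 := hperm.mem_iff.mp h1
      rw [List.mem_map] at h2
      obtain ⟨p, hp, hrot⟩ := h2
      rw [List.mem_range] at hp
      exact ⟨p, fun _ => ⟨hp, hrot⟩⟩
    · exact ⟨0, fun h => absurd h hi⟩
  choose pfun hpfun using hmem
  -- BWT characters
  have hBWTgetD : ∀ i, i < n → (BWT T).getD i 0 =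
      T.getD ((pfun i + n - 1) % n) 0 := by
    intro i hi
    obtain ⟨hplt, hprot⟩ := hpfun i hi
    rw [hBWT, List.getD_eq_getElem _ _ (by rw [List.length_map, hLlen]; omega),
      List.getElem_map]
    have : L[i] = L.getD i [] := by
      rw [List.getD_eq_getElem _ _ (by omega)]
    rw [this, ← hprot, RunsAux.getLast!_rot hT hplt]
  -- the key injectivity argument
  have key : ∀ i j : ℕ, i < j → j < n →
      (¬ (BWT T).getD (j - 1) 0 = (BWT T).getD j 0) →
      (RunsAux.Vof T (pfun i), RunsAux.bof T (pfun i)) ≠ (RunsAux.Vof T (pfun j), RunsAux.bof T (pfun j)) := by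
    intro i j hij hjn hrun heq
    apply hrun
    obtain ⟨hpi, hri⟩ := hpfun i (by omega)
    obtain ⟨hpj, hrj⟩ := hpfun j hjn
    obtain ⟨hpj1, hrj1⟩ := hpfun (j - 1) (by omega)
    rw [Prod.mk.injEq] at heq
    obtain ⟨hV, hb⟩ := heq
    set X := RunsAux.Vof T (pfun j) ++ [RunsAux.bof T (pfun j)] with hX
    have hXi : X <+: rot T (pfun i) := by
      rw [hX, ← hV, ← hb, RunsAux.Vb_prefix hT hpi]
      exact List.take_prefix _ _
    have hXj : X <+: rot T (pfun j) := by
      rw [hX, RunsAux.Vb_prefix hT hpj]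
      exact List.take_prefix _ _
    have hpair : ∀ k l : ℕ, k < l → l < n → lexLe (L.getD k []) (L.getD l []) = true := by
      intro k l hkl hln
      have := List.pairwise_iff_getElem.mp hsorted k l (by omega) (by omega) hkl
      rwa [List.getD_eq_getElem _ _ (by omega), List.getD_eq_getElem _ _ (by omega)]
    have h1 : lexLe (rot T (pfun i)) (rot T (pfun (j - 1))) = true := by
      rcases Nat.lt_or_ge i (j - 1) with h | h
      · rw [hri, hrj1]; exact hpair i (j - 1) h (by omega)
      · have : i = j - 1 := by omega
        rw [this]
        exact RunsAux.lexLe_refl _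
    have h2 : lexLe (rot T (pfun (j - 1))) (rot T (pfun j)) = true := by
      rw [hrj1, hrj]
      exact hpair (j - 1) j (by omega) hjn
    have hXj1 : X <+: rot T (pfun (j - 1)) :=
      RunsAux.prefix_of_between X _ _ _ h1 h2 hXi hXj
    have hlast := RunsAux.last_eq_of_prefix hT (by simp [hX]) hpj1 hpj hXj1 hXj
      (RunsAux.Vb_notM hT hpj)
    rw [hBWTgetD (j - 1) (by omega), hBWTgetD j hjn]
    exact hlast
  -- assemble
  have hcount := RunsAux.numRuns_le_card (BWT T)
  refine le_trans hcount ?_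
  apply Finset.card_le_card_of_injOn (fun i => (RunsAux.Vof T (pfun i), RunsAux.bof T (pfun i)))
  · intro i hi
    rw [Finset.mem_coe, Finset.mem_filter, Finset.mem_range, hBWTlen] at hi
    exact RunsAux.pair_mem_Fr hT (hpfun i hi.1).1
  · intro i hi j hj hij
    rw [Finset.mem_coe, Finset.mem_filter, Finset.mem_range, hBWTlen] at hi hj
    rcases Nat.lt_trichotomy i j with h | h | h
    · exfalso
      have hj0 : ¬ j = 0 := by omega
      rcases hj.2 with h' | h'
      · exact hj0 h'
      · exact key i j h hj.1 h' hij
    · exact h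
    · exfalso
      have hi0 : ¬ i = 0 := by omega
      rcases hi.2 with h' | h'
      · exact hi0 h'
      · exact key j i h hi.1 h' hij.symm
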